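/- Sokhotski–Plemelj formula: for every Schwartz function g : ℝ → ℂ, lim_{ε→0⁺} ∫ g(k)/(k + iε) dk = −iπ g(0) + lim_{ε→0⁺} ∫_{|k|>ε} g(k)/k dk. -/

import Mathlib

open Filter

open MeasureTheory Topology Set


noncomputable def spH (g : SchwartzMap ℝ ℂ) : ℝ → ℂ :=
  Function.update (fun k => (g k - g 0) / k) 0 (deriv g 0)

lemma spH_apply (g : SchwartzMap ℝ ℂ) {k : ℝ} (hk : k ≠ 0) :
    spH g k = (g k - g 0) / k := by
  rw [spH, Function.update_of_ne hk]

lemma spH_cont (g : SchwartzMap ℝ ℂ) : Continuous (spH g) := by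
  rw [continuous_iff_continuousAt]
  intro x
  rcases eq_or_ne x 0 with rfl | hx
  · rw [spH, continuousAt_update_same]
    have hd : HasDerivAt (⇑g) (deriv (⇑g) 0) 0 :=
      (g.differentiable.differentiableAt).hasDerivAt
    rw [hasDerivAt_iff_tendsto_slope] at hd
    refine hd.congr' ?_
    filter_upwards [self_mem_nhdsWithin] with k hk
    simp only [Set.mem_compl_iff, Set.mem_singleton_iff] at hk
    simp [slope, hk, div_eq_inv_mul, Complex.real_smul, Complex.ofReal_inv]
  · have hc : ContinuousAt (fun k : ℝ => (g k - g 0) / k) x := by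
      refine ContinuousAt.div ?_ ?_ ?_
      · exact (g.continuous.sub continuous_const).continuousAt
      · exact Complex.continuous_ofReal.continuousAt
      · exact_mod_cast hx
    refine hc.congr ?_
    filter_upwards [eventually_ne_nhds hx] with k hk
    rw [spH, Function.update_of_ne hk]

lemma sp_ne (k ε : ℝ) (hε : ε ≠ 0) : ((k : ℂ) + Complex.I * ε) ≠ 0 := by
  intro h
  have := congrArg Complex.im h
  simp at this
  exact hε this

lemma sp_abs_le (k ε : ℝ) : |k| ≤ ‖(k : ℂ) + Complex.I * ε‖ := by
  have : ((k : ℂ) + Complex.I * ε).re = k := by simp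
  calc |k| = |((k : ℂ) + Complex.I * ε).re| := by rw [this]
    _ ≤ ‖(k : ℂ) + Complex.I * ε‖ := Complex.abs_re_le_norm _

lemma sp_meas_abs (c : ℝ) : MeasurableSet {k : ℝ | c < |k|} :=
  (isOpen_lt continuous_const (continuous_abs)).measurableSet

lemma sp_int_tail (g : SchwartzMap ℝ ℂ) (ε : ℝ) :
    IntegrableOn (fun k : ℝ => g k / ((k : ℂ) + Complex.I * ε)) {k : ℝ | 1 < |k|} := by
  refine Integrable.mono (g.integrable.restrict) ?_ ?_
  · exact ((g.continuous.measurable.div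
      ((Complex.measurable_ofReal.add measurable_const))).aestronglyMeasurable).restrict
  · refine (ae_restrict_iff' (sp_meas_abs 1)).2 (ae_of_all _ fun k hk => ?_)
    have hk1 : (1 : ℝ) < |k| := hk
    have h1 : (1 : ℝ) ≤ ‖(k : ℂ) + Complex.I * ε‖ := le_trans hk1.le (sp_abs_le k ε)
    rw [norm_div]
    exact div_le_self (norm_nonneg _) h1

lemma sp_int_tail0 (g : SchwartzMap ℝ ℂ) :
    IntegrableOn (fun k : ℝ => g k / (k : ℂ)) {k : ℝ | 1 < |k|} := by
  refine Integrable.mono (g.integrable.restrict) ?_ ?_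
  · exact ((g.continuous.measurable.div
      Complex.measurable_ofReal).aestronglyMeasurable).restrict
  · refine (ae_restrict_iff' (sp_meas_abs 1)).2 (ae_of_all _ fun k hk => ?_)
    have hk1 : (1 : ℝ) < |k| := hk
    have h1 : (1 : ℝ) ≤ ‖(k : ℂ)‖ := by
      rw [Complex.norm_real, Real.norm_eq_abs]; exact hk1.le
    rw [norm_div]
    exact div_le_self (norm_nonneg _) h1

lemma sp_int_H (g : SchwartzMap ℝ ℂ) : IntegrableOn (spH g) (Icc (-1 : ℝ) 1) :=
  (spH_cont g).continuousOn.integrableOn_Icc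

lemma sp_int_one (ε : ℝ) (hε : 0 < ε) :
    ∫ k in Icc (-1 : ℝ) 1, ((k : ℂ) + Complex.I * ε)⁻¹
      = Complex.log (1 + Complex.I * ε) - Complex.log (-1 + Complex.I * ε) := by
  have hcont : Continuous (fun k : ℝ => ((k : ℂ) + Complex.I * ε)⁻¹) := by
    refine Continuous.inv₀ (Complex.continuous_ofReal.add continuous_const) ?_
    exact fun k => sp_ne k ε hε.ne'
  have key : ∀ k ∈ Set.uIcc (-1 : ℝ) 1,
      HasDerivAt (fun x : ℝ => Complex.log ((x : ℂ) + Complex.I * ε))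
        (((k : ℂ) + Complex.I * ε)⁻¹) k := by
    intro k _
    have hs : ((k : ℂ) + Complex.I * ε) ∈ Complex.slitPlane := by
      refine Or.inr ?_
      simp [hε.ne']
    have h1 : HasDerivAt (fun w : ℂ => Complex.log (w + Complex.I * ε))
        (((k : ℂ) + Complex.I * ε)⁻¹) (k : ℂ) := by
      have := (Complex.hasDerivAt_log hs).comp (k : ℂ)
        ((hasDerivAt_id ((k : ℂ))).add_const (Complex.I * ε))
      simpa [Function.comp_def] using this
    exact h1.comp_ofReal
  rw [MeasureTheory.integral_Icc_eq_integral_Ioc,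
    ← intervalIntegral.integral_of_le (by norm_num : (-1 : ℝ) ≤ 1),
    intervalIntegral.integral_eq_sub_of_hasDerivAt key
      (hcont.intervalIntegrable _ _)]
  norm_num

lemma sp_log_lim_neg :
    Tendsto (fun ε : ℝ => Complex.log (-1 + Complex.I * ε)) (nhdsWithin 0 (Set.Ioi 0))
      (nhds (Real.pi * Complex.I)) := by
  have h := Complex.tendsto_log_nhdsWithin_im_nonneg_of_re_neg_of_im_zero
    (z := (-1 : ℂ)) (by norm_num) (by simp)
  have hmap : Tendsto (fun ε : ℝ => (-1 : ℂ) + Complex.I * ε) (nhdsWithin 0 (Set.Ioi 0))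
      (nhdsWithin (-1) {z : ℂ | 0 ≤ z.im}) := by
    rw [tendsto_nhdsWithin_iff]
    constructor
    · have hco : Continuous (fun ε : ℝ => (-1 : ℂ) + Complex.I * ε) := by
        continuity
      have : Tendsto (fun ε : ℝ => (-1 : ℂ) + Complex.I * ε) (nhds 0) (nhds (-1)) := by
        simpa using hco.tendsto (0 : ℝ)
      exact this.mono_left nhdsWithin_le_nhds
    · filter_upwards [self_mem_nhdsWithin] with ε hε
      have hε' : (0 : ℝ) < ε := hε
      simp [hε'.le]
  have := h.comp hmap
  simpa [Function.comp_def] using this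

lemma sp_log_lim_pos :
    Tendsto (fun ε : ℝ => Complex.log (1 + Complex.I * ε)) (nhdsWithin 0 (Set.Ioi 0))
      (nhds 0) := by
  have hc : ContinuousAt Complex.log 1 := continuousAt_clog (by norm_num)
  have hmap : Tendsto (fun ε : ℝ => (1 : ℂ) + Complex.I * ε) (nhdsWithin 0 (Set.Ioi 0))
      (nhds 1) := by
    have hco : Continuous (fun ε : ℝ => (1 : ℂ) + Complex.I * ε) := by
      continuity
    have : Tendsto (fun ε : ℝ => (1 : ℂ) + Complex.I * ε) (nhds 0) (nhds 1) := by
      simpa using hco.tendsto (0 : ℝ)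
    exact this.mono_left nhdsWithin_le_nhds
  have := hc.tendsto.comp hmap
  simpa [Function.comp_def] using this

lemma sp_one_lim :
    Tendsto (fun ε : ℝ => ∫ k in Icc (-1 : ℝ) 1, ((k : ℂ) + Complex.I * ε)⁻¹)
      (nhdsWithin 0 (Set.Ioi 0)) (nhds (-(Real.pi * Complex.I))) := by
  have h := sp_log_lim_pos.sub sp_log_lim_neg
  rw [zero_sub] at h
  refine h.congr' ?_
  filter_upwards [self_mem_nhdsWithin] with ε hε
  exact (sp_int_one ε hε).symm

lemma sp_ae_ne (S : Set ℝ) : ∀ᵐ k ∂(volume.restrict S), k ≠ (0 : ℝ) := by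
  refine ae_restrict_of_ae ?_
  rw [ae_iff]
  have : {a : ℝ | ¬a ≠ 0} = {0} := by ext a; simp
  rw [this]
  exact Real.volume_singleton

lemma spC3 (g : SchwartzMap ℝ ℂ) :
    Tendsto (fun ε : ℝ => ∫ k in {k : ℝ | 1 < |k|}, g k / ((k : ℂ) + Complex.I * ε))
      (nhdsWithin 0 (Set.Ioi 0))
      (nhds (∫ k in {k : ℝ | 1 < |k|}, g k / (k : ℂ))) := by
  refine tendsto_integral_filter_of_dominated_convergence (fun k => ‖g k‖) ?_ ?_ ?_ ?_
  · exact Eventually.of_forall fun ε => ((g.continuous.measurable.div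
      ((Complex.measurable_ofReal.add measurable_const))).aestronglyMeasurable).restrict
  · filter_upwards [self_mem_nhdsWithin] with ε hε
    refine (ae_restrict_iff' (sp_meas_abs 1)).2 (ae_of_all _ fun k hk => ?_)
    have hk1 : (1 : ℝ) < |k| := hk
    have h1 : (1 : ℝ) ≤ ‖(k : ℂ) + Complex.I * ε‖ := le_trans hk1.le (sp_abs_le k ε)
    rw [norm_div]
    exact div_le_self (norm_nonneg _) h1
  · exact g.integrable.norm.restrict
  · refine (ae_restrict_iff' (sp_meas_abs 1)).2 (ae_of_all _ fun k hk => ?_)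
    have hk1 : (1 : ℝ) < |k| := hk
    have hk0 : (k : ℂ) ≠ 0 := by
      intro h
      rw [Complex.ofReal_eq_zero] at h
      rw [h] at hk1
      norm_num at hk1
    have hd : Tendsto (fun ε : ℝ => (k : ℂ) + Complex.I * ε) (nhdsWithin 0 (Set.Ioi 0))
        (nhds (k : ℂ)) := by
      have hco : Continuous (fun ε : ℝ => (k : ℂ) + Complex.I * ε) := by continuity
      have := hco.tendsto (0 : ℝ)
      simp only [Complex.ofReal_zero, mul_zero, add_zero] at this
      exact this.mono_left nhdsWithin_le_nhds
    exact Tendsto.div tendsto_const_nhds hd hk0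

lemma spC1 (g : SchwartzMap ℝ ℂ) (M : ℝ) (hM : ∀ x ∈ Icc (-1 : ℝ) 1, ‖spH g x‖ ≤ M) :
    Tendsto (fun ε : ℝ => ∫ k in Icc (-1 : ℝ) 1, (g k - g 0) / ((k : ℂ) + Complex.I * ε))
      (nhdsWithin 0 (Set.Ioi 0))
      (nhds (∫ k in Icc (-1 : ℝ) 1, spH g k)) := by
  refine tendsto_integral_filter_of_dominated_convergence (fun _ => M) ?_ ?_ ?_ ?_
  · exact Eventually.of_forall fun ε => (((g.continuous.measurable.sub measurable_const).div
      ((Complex.measurable_ofReal.add measurable_const))).aestronglyMeasurable).restrict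
  · filter_upwards [self_mem_nhdsWithin] with ε hε
    have h1 : ∀ᵐ k ∂(volume.restrict (Icc (-1 : ℝ) 1)), k ∈ Icc (-1 : ℝ) 1 :=
      ae_restrict_mem measurableSet_Icc
    filter_upwards [h1, sp_ae_ne (Icc (-1 : ℝ) 1)] with k hk hk0
    have hb := hM k hk
    rw [spH_apply g hk0, norm_div, Complex.norm_real, Real.norm_eq_abs] at hb
    have hkpos : (0 : ℝ) < |k| := abs_pos.2 hk0
    have habs : |k| ≤ ‖(k : ℂ) + Complex.I * ε‖ := sp_abs_le k ε
    rw [norm_div]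
    refine le_trans ?_ hb
    gcongr
  · exact integrableOn_const measure_Icc_lt_top.ne
  · refine ((sp_ae_ne _).mono fun k hk0 => ?_)
    have hkc : (k : ℂ) ≠ 0 := by exact_mod_cast hk0
    have hd : Tendsto (fun ε : ℝ => (k : ℂ) + Complex.I * ε) (nhdsWithin 0 (Set.Ioi 0))
        (nhds (k : ℂ)) := by
      have hco : Continuous (fun ε : ℝ => (k : ℂ) + Complex.I * ε) := by continuity
      have := hco.tendsto (0 : ℝ)
      simp only [Complex.ofReal_zero, mul_zero, add_zero] at this
      exact this.mono_left nhdsWithin_le_nhds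
    rw [spH_apply g hk0]
    exact Tendsto.div tendsto_const_nhds hd hkc

lemma sp_set_eq (ε : ℝ) (hε : 0 < ε) (hε1 : ε < 1) :
    {k : ℝ | ε < |k|} ∩ Icc (-1 : ℝ) 1 = Ico (-1 : ℝ) (-ε) ∪ Ioc ε 1 := by
  ext k
  simp only [Set.mem_inter_iff, Set.mem_setOf_eq, Set.mem_Icc, Set.mem_union, Set.mem_Ico,
    Set.mem_Ioc]
  constructor
  · rintro ⟨h1, h2, h3⟩
    rcases lt_abs.1 h1 with h | h
    · right; exact ⟨h, h3⟩
    · left; exact ⟨h2, by linarith⟩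
  · rintro (⟨h1, h2⟩ | ⟨h1, h2⟩)
    · exact ⟨lt_abs.2 (Or.inr (by linarith)), h1, by linarith⟩
    · exact ⟨lt_abs.2 (Or.inl h1), by linarith, h2⟩

lemma sp_int_inv_left (ε : ℝ) (hε : 0 < ε) (hε1 : ε < 1) :
    IntegrableOn (fun k : ℝ => ((k : ℂ))⁻¹) (Ico (-1 : ℝ) (-ε)) := by
  refine IntegrableOn.mono_set ?_ Set.Ico_subset_Icc_self
  refine ContinuousOn.integrableOn_Icc ?_
  intro k hk
  refine (ContinuousAt.continuousWithinAt ?_)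
  refine ContinuousAt.inv₀ Complex.continuous_ofReal.continuousAt ?_
  have : k ≠ 0 := by
    rcases hk with ⟨_, h2⟩
    intro h; rw [h] at h2; linarith
  exact_mod_cast this

lemma sp_int_inv_right (ε : ℝ) (hε : 0 < ε) (hε1 : ε < 1) :
    IntegrableOn (fun k : ℝ => ((k : ℂ))⁻¹) (Ioc ε 1) := by
  refine IntegrableOn.mono_set ?_ Set.Ioc_subset_Icc_self
  refine ContinuousOn.integrableOn_Icc ?_
  intro k hk
  refine (ContinuousAt.continuousWithinAt ?_)
  refine ContinuousAt.inv₀ Complex.continuous_ofReal.continuousAt ?_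
  have : k ≠ 0 := by
    rcases hk with ⟨h1, _⟩
    intro h; rw [h] at h1; linarith
  exact_mod_cast this

lemma sp_inv_zero (ε : ℝ) (hε : 0 < ε) (hε1 : ε < 1) :
    ∫ k in Ico (-1 : ℝ) (-ε) ∪ Ioc ε 1, ((k : ℂ))⁻¹ = 0 := by
  have hdisj : Disjoint (Ico (-1 : ℝ) (-ε)) (Ioc ε 1) := by
    rw [Set.disjoint_left]
    rintro k ⟨_, h2⟩ ⟨h3, _⟩
    linarith
  rw [setIntegral_union hdisj measurableSet_Ioc (sp_int_inv_left ε hε hε1)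
    (sp_int_inv_right ε hε hε1)]
  have h1 : ∫ k in Ico (-1 : ℝ) (-ε), ((k : ℂ))⁻¹ = Real.log ε := by
    rw [integral_Ico_eq_integral_Ioo, ← integral_Ioc_eq_integral_Ioo,
      ← intervalIntegral.integral_of_le (by linarith : (-1 : ℝ) ≤ -ε)]
    simp_rw [← Complex.ofReal_inv]
    rw [intervalIntegral.integral_ofReal, integral_inv]
    · norm_num
    · rw [Set.uIcc_of_le (by linarith : (-1 : ℝ) ≤ -ε)]
      rintro ⟨_, h2⟩
      linarith
  have h2 : ∫ k in Ioc ε 1, ((k : ℂ))⁻¹ = -Real.log ε := by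
    rw [← intervalIntegral.integral_of_le (by linarith : ε ≤ 1)]
    simp_rw [← Complex.ofReal_inv]
    rw [intervalIntegral.integral_ofReal, integral_inv]
    · rw [one_div, Real.log_inv]; norm_num
    · rw [Set.uIcc_of_le (by linarith : ε ≤ 1)]
      rintro ⟨h1, _⟩
      linarith
  rw [h1, h2]
  ring

lemma sp_pv_piece (g : SchwartzMap ℝ ℂ) (ε : ℝ) (hε : 0 < ε) (hε1 : ε < 1) :
    ∫ k in {k : ℝ | ε < |k|}, g k / (k : ℂ)
      = (∫ k in {k : ℝ | ε < |k|} ∩ Icc (-1 : ℝ) 1, spH g k)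
        + ∫ k in {k : ℝ | 1 < |k|}, g k / (k : ℂ) := by
  set S := {k : ℝ | ε < |k|} ∩ Icc (-1 : ℝ) 1 with hS
  have hSeq : S = Ico (-1 : ℝ) (-ε) ∪ Ioc ε 1 := sp_set_eq ε hε hε1
  have hSmeas : MeasurableSet S := (sp_meas_abs ε).inter measurableSet_Icc
  have hintH : IntegrableOn (spH g) S := (sp_int_H g).mono_set Set.inter_subset_right
  have hintInv : IntegrableOn (fun k : ℝ => ((k : ℂ))⁻¹) S := by
    rw [hSeq]
    exact (sp_int_inv_left ε hε hε1).union (sp_int_inv_right ε hε hε1)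
  have hEq : Set.EqOn (fun k : ℝ => g k / (k : ℂ))
      (fun k : ℝ => spH g k + g 0 * ((k : ℂ))⁻¹) S := by
    intro k hk
    have hk0 : k ≠ 0 := by
      have h1 : ε < |k| := hk.1
      intro h; rw [h] at h1; simp at h1; linarith
    have hkc : (k : ℂ) ≠ 0 := by exact_mod_cast hk0
    simp only [spH_apply g hk0]
    field_simp
    ring
  have hsplit : {k : ℝ | ε < |k|} = S ∪ {k : ℝ | 1 < |k|} := by
    ext k
    simp only [hS, Set.mem_union, Set.mem_inter_iff, Set.mem_setOf_eq, Set.mem_Icc]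
    constructor
    · intro h
      by_cases h1 : |k| ≤ 1
      · left; exact ⟨h, abs_le.1 h1⟩
      · right; linarith [not_le.1 h1]
    · rintro (⟨h, _⟩ | h)
      · exact h
      · linarith
  have hdisj : Disjoint S {k : ℝ | 1 < |k|} := by
    rw [Set.disjoint_left]
    rintro k ⟨_, hk2⟩ hk3
    have : |k| ≤ 1 := abs_le.2 hk2
    have h3 : (1 : ℝ) < |k| := hk3
    linarith
  have hintS : IntegrableOn (fun k : ℝ => g k / (k : ℂ)) S :=
    IntegrableOn.congr_fun (hintH.add (hintInv.const_mul (g 0)))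
      (fun k hk => (hEq hk).symm) hSmeas
  rw [hsplit, setIntegral_union hdisj (sp_meas_abs 1) hintS (sp_int_tail0 g)]
  congr 1
  rw [setIntegral_congr_fun hSmeas hEq,
    integral_add hintH (hintInv.const_mul (g 0)), integral_const_mul, hSeq,
    sp_inv_zero ε hε hε1]
  simp

lemma spPV (g : SchwartzMap ℝ ℂ) (M : ℝ) (hM : ∀ x ∈ Icc (-1 : ℝ) 1, ‖spH g x‖ ≤ M) :
    Tendsto (fun ε : ℝ => ∫ k in {k : ℝ | ε < |k|} ∩ Icc (-1 : ℝ) 1, spH g k)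
      (nhdsWithin 0 (Set.Ioi 0)) (nhds (∫ k in Icc (-1 : ℝ) 1, spH g k)) := by
  have hdiff : ∀ ε : ℝ, 0 < ε →
      ‖(∫ k in Icc (-1 : ℝ) 1, spH g k)
        - ∫ k in {k : ℝ | ε < |k|} ∩ Icc (-1 : ℝ) 1, spH g k‖ ≤ M * (2 * ε) := by
    intro ε hε
    set S := {k : ℝ | ε < |k|} ∩ Icc (-1 : ℝ) 1 with hS
    set T := {k : ℝ | ε < |k|}ᶜ ∩ Icc (-1 : ℝ) 1 with hT
    have hunion : Icc (-1 : ℝ) 1 = S ∪ T := by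
      rw [hS, hT, ← Set.union_inter_distrib_right, Set.union_compl_self, Set.univ_inter]
    have hdisj : Disjoint S T := by
      rw [Set.disjoint_left]
      rintro k ⟨hk1, _⟩ ⟨hk2, _⟩
      exact hk2 hk1
    have hTmeas : MeasurableSet T := (sp_meas_abs ε).compl.inter measurableSet_Icc
    have hintS : IntegrableOn (spH g) S := (sp_int_H g).mono_set Set.inter_subset_right
    have hintT : IntegrableOn (spH g) T := (sp_int_H g).mono_set Set.inter_subset_right
    have hsplit : (∫ k in Icc (-1 : ℝ) 1, spH g k)
        = (∫ k in S, spH g k) + ∫ k in T, spH g k := by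
      rw [hunion]
      exact setIntegral_union hdisj hTmeas hintS hintT
    rw [hsplit]
    have h1 : (∫ k in S, spH g k) + (∫ k in T, spH g k) - ∫ k in S, spH g k
        = ∫ k in T, spH g k := by ring
    rw [h1]
    have hTsub : T ⊆ Icc (-ε) ε := by
      rintro k ⟨hk1, _⟩
      have : ¬ ε < |k| := hk1
      exact abs_le.1 (not_lt.1 this)
    have hTfin : volume T < ⊤ :=
      lt_of_le_of_lt (measure_mono hTsub) (by rw [Real.volume_Icc]; exact ENNReal.ofReal_lt_top)
    have hb : ‖∫ k in T, spH g k‖ ≤ M * (volume T).toReal :=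
      norm_setIntegral_le_of_norm_le_const hTfin
        (fun x hx => hM x hx.2)
    refine le_trans hb ?_
    have hM0 : 0 ≤ M := le_trans (norm_nonneg _) (hM 0 (by norm_num))
    have hvol : (volume T).toReal ≤ 2 * ε := by
      have : volume T ≤ volume (Icc (-ε) ε) := measure_mono hTsub
      rw [Real.volume_Icc] at this
      have h2 : (volume T).toReal ≤ (ENNReal.ofReal (ε - -ε)).toReal :=
        ENNReal.toReal_mono ENNReal.ofReal_ne_top this
      rw [ENNReal.toReal_ofReal (by linarith)] at h2
      linarith
    exact mul_le_mul_of_nonneg_left hvol hM0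
  have hlim0 : Tendsto (fun ε : ℝ => M * (2 * ε)) (nhdsWithin 0 (Set.Ioi 0)) (nhds 0) := by
    have : Continuous (fun ε : ℝ => M * (2 * ε)) := by continuity
    have h := this.tendsto 0
    simp only [mul_zero] at h
    exact h.mono_left nhdsWithin_le_nhds
  have hz : Tendsto (fun ε : ℝ => (∫ k in Icc (-1 : ℝ) 1, spH g k)
      - ∫ k in {k : ℝ | ε < |k|} ∩ Icc (-1 : ℝ) 1, spH g k)
      (nhdsWithin 0 (Set.Ioi 0)) (nhds 0) := by
    refine squeeze_zero_norm' ?_ hlim0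
    filter_upwards [self_mem_nhdsWithin] with ε hε
    exact hdiff ε hε
  have hfinal := (tendsto_const_nhds
      (x := ∫ k in Icc (-1 : ℝ) 1, spH g k) (f := nhdsWithin (0:ℝ) (Set.Ioi 0))).sub hz
  rw [sub_zero] at hfinal
  refine hfinal.congr fun ε => ?_
  ring

lemma sp_compl : (Icc (-1 : ℝ) 1)ᶜ = {k : ℝ | 1 < |k|} := by
  ext k
  simp only [Set.mem_compl_iff, Set.mem_Icc, Set.mem_setOf_eq, not_and_or, not_le]
  rw [lt_abs]
  constructor
  · rintro (h | h)
    · right; linarith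
    · left; exact h
  · rintro (h | h)
    · right; exact h
    · left; linarith

lemma sp_full_split (g : SchwartzMap ℝ ℂ) (ε : ℝ) (hε : 0 < ε) :
    ∫ k : ℝ, g k / ((k : ℂ) + Complex.I * ε)
      = ((∫ k in Icc (-1 : ℝ) 1, (g k - g 0) / ((k : ℂ) + Complex.I * ε))
          + g 0 * (∫ k in Icc (-1 : ℝ) 1, ((k : ℂ) + Complex.I * ε)⁻¹))
        + ∫ k in {k : ℝ | 1 < |k|}, g k / ((k : ℂ) + Complex.I * ε) := by
  have hne : ∀ k : ℝ, ((k : ℂ) + Complex.I * ε) ≠ 0 := fun k => sp_ne k ε hε.ne'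
  have hd : Continuous (fun k : ℝ => (k : ℂ) + Complex.I * ε) := by continuity
  have hcont : Continuous (fun k : ℝ => g k / ((k : ℂ) + Complex.I * ε)) :=
    g.continuous.div hd hne
  have hIcc : IntegrableOn (fun k : ℝ => g k / ((k : ℂ) + Complex.I * ε))
      (Icc (-1 : ℝ) 1) := hcont.continuousOn.integrableOn_Icc
  have hint : Integrable (fun k : ℝ => g k / ((k : ℂ) + Complex.I * ε)) := by
    rw [← integrableOn_univ, ← Set.union_compl_self (Icc (-1 : ℝ) 1)]
    exact hIcc.union (sp_compl ▸ sp_int_tail g ε)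
  rw [← integral_add_compl measurableSet_Icc hint, sp_compl]
  congr 1
  have heq : (fun k : ℝ => g k / ((k : ℂ) + Complex.I * ε))
      = fun k : ℝ => (g k - g 0) / ((k : ℂ) + Complex.I * ε)
          + g 0 * ((k : ℂ) + Complex.I * ε)⁻¹ := by
    funext k
    have h := hne k
    field_simp
    ring
  calc ∫ k in Icc (-1 : ℝ) 1, g k / ((k : ℂ) + Complex.I * ε)
      = ∫ k in Icc (-1 : ℝ) 1, ((g k - g 0) / ((k : ℂ) + Complex.I * ε)
          + g 0 * ((k : ℂ) + Complex.I * ε)⁻¹) := by rw [heq]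
    _ = (∫ k in Icc (-1 : ℝ) 1, (g k - g 0) / ((k : ℂ) + Complex.I * ε))
          + ∫ k in Icc (-1 : ℝ) 1, g 0 * ((k : ℂ) + Complex.I * ε)⁻¹ := by
        refine integral_add ?_ ?_
        · exact ((g.continuous.sub continuous_const).div hd hne).continuousOn.integrableOn_Icc
        · exact ((Continuous.inv₀ hd hne).continuousOn.integrableOn_Icc).const_mul _
    _ = _ := by rw [integral_const_mul]


/-- Sokhotski–Plemelj formula: for every Schwartz function `g`, the principal
value `P = lim_{ε→0⁺} ∫_{|k|>ε} g(k)/k dk` exists and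
`lim_{ε→0⁺} ∫ g(k)/(k+iε) dk = −iπ g(0) + P`. -/
theorem stmt11 (g : SchwartzMap ℝ ℂ) :
    ∃ P : ℂ,
      Tendsto (fun ε : ℝ => ∫ k in {k : ℝ | ε < |k|}, g k / k)
        (nhdsWithin 0 (Set.Ioi 0)) (nhds P) ∧
      Tendsto (fun ε : ℝ => ∫ k : ℝ, g k / (k + Complex.I * ε))
        (nhdsWithin 0 (Set.Ioi 0))
        (nhds (-(Complex.I * Real.pi * g 0) + P)) := by
  obtain ⟨M, hM⟩ : ∃ M, ∀ x ∈ Icc (-1 : ℝ) 1, ‖spH g x‖ ≤ M :=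
    isCompact_Icc.exists_bound_of_continuousOn (spH_cont g).continuousOn
  refine ⟨(∫ k in Icc (-1 : ℝ) 1, spH g k) + ∫ k in {k : ℝ | 1 < |k|}, g k / (k : ℂ),
    ?_, ?_⟩
  · have h := (spPV g M hM).add
      (tendsto_const_nhds (x := ∫ k in {k : ℝ | 1 < |k|}, g k / (k : ℂ))
        (f := nhdsWithin (0 : ℝ) (Set.Ioi 0)))
    refine h.congr' ?_
    filter_upwards [Ioo_mem_nhdsGT_of_mem (Set.left_mem_Ico.2 zero_lt_one)] with ε hε
    exact (sp_pv_piece g ε hε.1 hε.2).symm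
  · have h := ((spC1 g M hM).add (sp_one_lim.const_mul (g 0))).add (spC3 g)
    have h2 := h.congr' (by
      filter_upwards [self_mem_nhdsWithin] with ε hε
      exact (sp_full_split g ε hε).symm)
    convert h2 using 2
    ring
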